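/- In the full matrix algebra Mₙ(ℂ), every Lie ideal (linear subspace L with [x,a] ∈ L for all x ∈ L, a ∈ Mₙ(ℂ)) is one of the following four subspaces: {0}, the scalar matrices ℂ·I, the matrices of trace zero, or all of Mₙ(ℂ). -/

import Mathlib

open Matrix

namespace LieIdealClassAux

variable {n : ℕ} {L : Submodule ℂ (Matrix (Fin n) (Fin n) ℂ)}

private theorem smul_mem_cancel {c : ℂ} (hc : c ≠ 0) {y z : Matrix (Fin n) (Fin n) ℂ}
    (hy : y ∈ L) (h : y = c • z) : z ∈ L := by
  have := L.smul_mem c⁻¹ hy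
  rwa [h, smul_smul, inv_mul_cancel₀ hc, one_smul] at this

private theorem sandwich (x : Matrix (Fin n) (Fin n) ℂ) {k l : Fin n} (h : k ≠ l) :
    single k l (1:ℂ) * x * single k l (1:ℂ) = x l k • single k l (1:ℂ) := by
  ext a b
  rcases eq_or_ne b l with hb | hb
  · subst hb
    rcases eq_or_ne a k with ha | ha
    · subst ha; simp
    · simp [ha, Ne.symm ha]
  · simp [hb, Ne.symm hb]

/-- If some `x ∈ L` has a nonzero off-diagonal entry `x l k`, then `E k l ∈ L`. -/
private theorem stdBasis_mem_of_entry
    (hLie : ∀ x ∈ L, ∀ a : Matrix (Fin n) (Fin n) ℂ, x * a - a * x ∈ L)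
    {x : Matrix (Fin n) (Fin n) ℂ} (hx : x ∈ L) {k l : Fin n} (hkl : k ≠ l)
    (hne : x l k ≠ 0) : single k l (1:ℂ) ∈ L := by
  set e : Matrix (Fin n) (Fin n) ℂ := single k l (1:ℂ) with he
  have h2 := hLie _ (hLie x hx e) e
  refine smul_mem_cancel (c := (-2 : ℂ) * x l k) (by simp [hne]) h2 ?_
  have hee : e * e = 0 := single_mul_single_of_ne _ _ _ _ (Ne.symm hkl) _
  have hs : e * x * e = x l k • e := sandwich x hkl
  rw [sub_mul, mul_sub, mul_assoc x e e, hee, mul_zero, ← mul_assoc e e x, hee, zero_mul,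
    ← mul_assoc e x e, hs]
  module

/-- From one off-diagonal `E k l ∈ L` all off-diagonal `E i j` lie in `L`. -/
private theorem all_offdiag_mem
    (hLie : ∀ x ∈ L, ∀ a : Matrix (Fin n) (Fin n) ℂ, x * a - a * x ∈ L)
    {k l : Fin n} (hkl : k ≠ l) (hE : single k l (1:ℂ) ∈ L) :
    ∀ i j : Fin n, i ≠ j → single i j (1:ℂ) ∈ L := by
  have step1 : ∀ i : Fin n, i ≠ k → single k i (1:ℂ) ∈ L := by
    intro i hik
    rcases eq_or_ne i l with rfl | hil
    · exact hE
    · have := hLie _ hE (single l i 1)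
      simpa [hik] using this
  have step2 : ∀ i : Fin n, i ≠ k → single i k (1:ℂ) ∈ L := by
    intro i hik
    have h2 := hLie _ (hLie _ (step1 i hik) (single i k 1)) (single i k 1)
    refine smul_mem_cancel (c := (-2 : ℂ)) (by norm_num) h2 ?_
    have e1 : single k (i:Fin n) (1:ℂ) * single i k 1 = single k k 1 := by simp
    have e2 : single i (k:Fin n) (1:ℂ) * single k i 1 = single i i 1 := by simp
    rw [e1, e2, sub_mul, mul_sub]
    have e3 : single k (k:Fin n) (1:ℂ) * single i k 1 = 0 :=
      single_mul_single_of_ne _ _ _ _ (Ne.symm hik) _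
    have e4 : single i (i:Fin n) (1:ℂ) * single i k 1 = single i k 1 := by simp
    have e5 : single i (k:Fin n) (1:ℂ) * single k k 1 = single i k 1 := by simp
    have e6 : single i (k:Fin n) (1:ℂ) * single i i 1 = 0 :=
      single_mul_single_of_ne _ _ _ _ (Ne.symm hik) _
    rw [e3, e4, e5, e6]
    module
  intro i j hij
  rcases eq_or_ne i k with rfl | hik
  · exact step1 j (Ne.symm hij)
  · rcases eq_or_ne j k with rfl | hjk
    · exact step2 i hik
    · have := hLie _ (step2 i hik) (single k j 1)
      simpa [Ne.symm hij] using this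

private theorem diag_mem
    (hLie : ∀ x ∈ L, ∀ a : Matrix (Fin n) (Fin n) ℂ, x * a - a * x ∈ L)
    (hall : ∀ i j : Fin n, i ≠ j → single i j (1:ℂ) ∈ L)
    {i j : Fin n} (hij : i ≠ j) :
    single i i (1:ℂ) - single j j (1:ℂ) ∈ L := by
  have := hLie _ (hall i j hij) (single j i 1)
  simpa using this

/-- all trace-zero matrices lie in `L`. -/
private theorem sl_sub
    (hall : ∀ i j : Fin n, i ≠ j → single i j (1:ℂ) ∈ L)
    (hdiag : ∀ i j : Fin n, i ≠ j → single i i (1:ℂ) - single j j (1:ℂ) ∈ L)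
    (b : Fin n) {x : Matrix (Fin n) (Fin n) ℂ} (hx : trace x = 0) : x ∈ L := by
  have hmem : ∀ i j : Fin n,
      (if i = j then x i i • (single i i (1:ℂ) - single b b 1)
       else x i j • single i j 1) ∈ L := by
    intro i j
    split_ifs with hij
    · rcases eq_or_ne i b with rfl | hib
      · simp
      · exact L.smul_mem _ (hdiag i b hib)
    · exact L.smul_mem _ (hall i j hij)
  have h1 : ∀ i j : Fin n,
      (if i = j then x i i • (single i i (1:ℂ) - single b b 1)
       else x i j • single i j 1)
      = single i j (x i j) - (if i = j then x i i • single b b (1:ℂ) else 0) := by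
    intro i j
    split_ifs with hij
    · subst hij; rw [smul_sub]; congr 1 <;> simp [smul_single]
    · simp [smul_single]
  have hsum : x = ∑ i : Fin n, ∑ j : Fin n,
      (if i = j then x i i • (single i i (1:ℂ) - single b b 1)
       else x i j • single i j 1) := by
    simp_rw [h1, Finset.sum_sub_distrib]
    have h2 : ∑ i : Fin n, ∑ j : Fin n,
        (if i = j then x i i • single b b (1:ℂ) else 0) = 0 := by
      have : ∀ i : Fin n, ∑ j : Fin n,
          (if i = j then x i i • single b b (1:ℂ) else 0)
          = x i i • single b b (1:ℂ) := by
        intro i; simp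
      simp_rw [this, ← Finset.sum_smul]
      have : (∑ i : Fin n, x i i) = 0 := hx
      rw [this, zero_smul]
    rw [h2, sub_zero, ← matrix_eq_sum_single]
  rw [hsum]
  exact Submodule.sum_mem _ fun i _ => Submodule.sum_mem _ fun j _ => hmem i j

private theorem diag_comm (x : Matrix (Fin n) (Fin n) ℂ)
    (hoff : ∀ p q : Fin n, p ≠ q → x p q = 0) {i j : Fin n} (hij : i ≠ j) :
    x * single i j (1:ℂ) - single i j (1:ℂ) * x
      = (x i i - x j j) • single i j (1:ℂ) := by
  ext a b
  rcases eq_or_ne a i with rfl | ha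
  · rcases eq_or_ne b j with rfl | hb
    · simp
    · simp [hb, Ne.symm hb, hoff j b (fun h => hb h.symm)]
  · rcases eq_or_ne b j with rfl | hb
    · simp [ha, Ne.symm ha, hoff a i ha]
    · simp [ha, hb, Ne.symm ha, Ne.symm hb]

end LieIdealClassAux

/-- Every Lie ideal of the full matrix algebra `Mₙ(ℂ)` (a linear subspace
`L` with `x*a - a*x ∈ L` for all `x ∈ L`, `a`) is one of: `{0}`, the scalar matrices,
the trace-zero matrices, or all of `Mₙ(ℂ)`. -/
theorem lie_ideal_matrix_classification
    {n : ℕ} (L : Submodule ℂ (Matrix (Fin n) (Fin n) ℂ))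
    (hLie : ∀ x ∈ L, ∀ a : Matrix (Fin n) (Fin n) ℂ, x * a - a * x ∈ L) :
    L = ⊥ ∨
    L = Submodule.span ℂ {(1 : Matrix (Fin n) (Fin n) ℂ)} ∨
    L = LinearMap.ker (Matrix.traceLinearMap (Fin n) ℂ ℂ) ∨
    L = ⊤ := by
  open LieIdealClassAux in
  rcases Nat.eq_zero_or_pos n with rfl | hn
  · left
    exact Subsingleton.elim L ⊥
  by_cases hscal : ∀ x ∈ L, ∀ i j : Fin n, (i ≠ j → x i j = 0) ∧ x i i = x j j
  · -- every element of L is scalar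
    set b : Fin n := ⟨0, hn⟩
    have hsc : ∀ x ∈ L, x = x b b • (1 : Matrix (Fin n) (Fin n) ℂ) := by
      intro x hx
      ext i j
      rcases eq_or_ne i j with rfl | hij
      · simp [Matrix.one_apply, (hscal x hx i b).2]
      · simp [Matrix.one_apply, hij, (hscal x hx i j).1 hij]
    by_cases hbot : L = ⊥
    · exact Or.inl hbot
    · right; left
      obtain ⟨x, hx, hx0⟩ := Submodule.exists_mem_ne_zero_of_ne_bot hbot
      have hxb : x b b ≠ 0 := by
        intro h
        apply hx0
        rw [hsc x hx, h, zero_smul]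
      have hone : (1 : Matrix (Fin n) (Fin n) ℂ) ∈ L := by
        have h1 : (x b b) • (1 : Matrix (Fin n) (Fin n) ℂ) ∈ L := by
          rw [← hsc x hx]; exact hx
        have := L.smul_mem (x b b)⁻¹ h1
        rwa [smul_smul, inv_mul_cancel₀ hxb, one_smul] at this
      apply le_antisymm
      · intro y hy
        rw [hsc y hy]
        exact Submodule.smul_mem _ _ (Submodule.mem_span_singleton_self _)
      · rw [Submodule.span_singleton_le_iff_mem]
        exact hone
  · -- there is a non-scalar element
    push_neg at hscal
    obtain ⟨x, hx, i, j, hx2⟩ := hscal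
    -- produce an off-diagonal std basis matrix in L
    have hEex : ∃ k l : Fin n, k ≠ l ∧ single k l (1:ℂ) ∈ L := by
      by_cases hoff : ∀ p q : Fin n, p ≠ q → x p q = 0
      · -- x is diagonal; distinct diagonal entries
        have hij2 : x i i ≠ x j j := hx2 fun h => hoff i j h
        have hij : i ≠ j := by rintro rfl; exact hij2 rfl
        refine ⟨i, j, hij, ?_⟩
        have h1 := hLie x hx (single i j 1)
        rw [diag_comm x hoff hij] at h1
        exact smul_mem_cancel (sub_ne_zero.2 hij2) h1 rfl
      · push_neg at hoff
        obtain ⟨p, q, hpq, hne⟩ := hoff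
        exact ⟨q, p, Ne.symm hpq, stdBasis_mem_of_entry hLie hx (Ne.symm hpq) hne⟩
    obtain ⟨k, l, hkl, hE⟩ := hEex
    have hall := all_offdiag_mem hLie hkl hE
    have hdiag : ∀ i j : Fin n, i ≠ j →
        single i i (1:ℂ) - single j j (1:ℂ) ∈ L :=
      fun i j hij => diag_mem hLie hall hij
    have hsl : ∀ y : Matrix (Fin n) (Fin n) ℂ, Matrix.trace y = 0 → y ∈ L :=
      fun y hy => sl_sub hall hdiag ⟨0, hn⟩ hy
    by_cases htr : ∀ y ∈ L, Matrix.trace y = 0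
    · right; right; left
      apply le_antisymm
      · intro y hy
        simpa using htr y hy
      · intro y hy
        exact hsl y (by simpa using hy)
    · right; right; right
      push_neg at htr
      obtain ⟨y, hy, hty⟩ := htr
      have hcard : ((n : ℂ)) ≠ 0 := by
        exact_mod_cast Nat.cast_ne_zero.2 hn.ne'
      have hz : y - (Matrix.trace y / n) • (1 : Matrix (Fin n) (Fin n) ℂ) ∈ L := by
        apply hsl
        simp only [Matrix.trace_sub, Matrix.trace_smul, Matrix.trace_one, Fintype.card_fin, smul_eq_mul]
        field_simp
        ring
      have hone : (1 : Matrix (Fin n) (Fin n) ℂ) ∈ L := by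
        have h1 : (Matrix.trace y / n) • (1 : Matrix (Fin n) (Fin n) ℂ) ∈ L := by
          have := L.sub_mem hy hz
          simpa using this
        have := L.smul_mem (Matrix.trace y / n)⁻¹ h1
        rwa [smul_smul, inv_mul_cancel₀ (div_ne_zero hty hcard), one_smul] at this
      rw [eq_top_iff]
      intro z _
      have h2 : z - (Matrix.trace z / n) • (1 : Matrix (Fin n) (Fin n) ℂ) ∈ L := by
        apply hsl
        simp only [Matrix.trace_sub, Matrix.trace_smul, Matrix.trace_one, Fintype.card_fin, smul_eq_mul]
        field_simp
        ring
      have := L.add_mem h2 (L.smul_mem (Matrix.trace z / n) hone)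
      simpa using this
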